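/- Let X be a finite partially ordered set and R a ring. Then the group of multiplicative automorphisms of I(X,R) is commutative: if φ and ψ are multiplicative ring automorphisms of I(X,R), then φ ∘ ψ = ψ ∘ φ. -/

import Mathlib

/-- A ring automorphism of the incidence algebra is *multiplicative* if it fixes every
function supported on the diagonal and maps functions vanishing on the diagonal to
functions vanishing on the diagonal. -/
def IsMultAut {X R : Type*} [Preorder X] [LocallyFiniteOrder X] [DecidableEq X] [Ring R]
    (φ : RingAut (IncidenceAlgebra R X)) : Prop :=
  (∀ f : IncidenceAlgebra R X, (∀ x y : X, x ≠ y → f x y = 0) → φ f = f) ∧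
  (∀ f : IncidenceAlgebra R X, (∀ x : X, f x x = 0) → ∀ x : X, (φ f) x x = 0)

section Aux

open Finset

variable {X R : Type*} [PartialOrder X] [LocallyFiniteOrder X] [DecidableEq X] [Ring R]

/-- The incidence algebra element with a single (possibly) nonzero entry. -/
def iaSingle (x y : X) (h : x ≤ y) (r : R) : IncidenceAlgebra R X :=
  ⟨fun a b => if a = x ∧ b = y then r else 0, by
    intro a b hab
    split
    · next hc => obtain ⟨rfl, rfl⟩ := hc; exact absurd h hab
    · rfl⟩

lemma iaSingle_apply (x y : X) (h : x ≤ y) (r : R) (a b : X) :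
    iaSingle x y h r a b = if a = x ∧ b = y then r else 0 := rfl

/-- The constant diagonal element. -/
def iaDiag (r : R) : IncidenceAlgebra R X :=
  ⟨fun a b => if a = b then r else 0, by
    intro a b hab
    split
    · next hc => exact absurd hc.le hab
    · rfl⟩

lemma iaDiag_apply (r : R) (a b : X) : (iaDiag r : IncidenceAlgebra R X) a b =
    if a = b then r else 0 := rfl

lemma iaDiag_mul_apply (r : R) (f : IncidenceAlgebra R X) (a b : X) :
    (iaDiag r * f : IncidenceAlgebra R X) a b = r * f a b := by
  rw [IncidenceAlgebra.mul_apply]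
  rw [Finset.sum_eq_single a]
  · simp [iaDiag_apply]
  · intro z hz hza
    simp [iaDiag_apply, Ne.symm hza]
  · intro ha
    rw [Finset.mem_Icc] at ha
    push_neg at ha
    have hab : ¬ a ≤ b := fun h => (ha le_rfl) h
    simp [IncidenceAlgebra.apply_eq_zero_of_not_le hab]

lemma mul_iaDiag_apply (r : R) (f : IncidenceAlgebra R X) (a b : X) :
    (f * iaDiag r : IncidenceAlgebra R X) a b = f a b * r := by
  rw [IncidenceAlgebra.mul_apply]
  rw [Finset.sum_eq_single b]
  · simp [iaDiag_apply]
  · intro z hz hzb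
    simp [iaDiag_apply, hzb]
  · intro hb
    rw [Finset.mem_Icc] at hb
    push_neg at hb
    have hab : ¬ a ≤ b := fun h => (hb h) le_rfl
    simp [IncidenceAlgebra.apply_eq_zero_of_not_le hab]

/-- The diagonal idempotent. -/
def iaE (x : X) : IncidenceAlgebra R X := iaSingle x x le_rfl 1

lemma iaE_mul_apply (x : X) (f : IncidenceAlgebra R X) (a b : X) :
    (iaE x * f : IncidenceAlgebra R X) a b = if a = x then f a b else 0 := by
  rw [IncidenceAlgebra.mul_apply]
  rw [Finset.sum_eq_single a]
  · simp [iaE, iaSingle_apply, and_comm]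
  · intro z hz hza
    simp [iaE, iaSingle_apply]
    intro h1 h2; exact absurd (h2.trans h1.symm) hza
  · intro ha
    rw [Finset.mem_Icc] at ha
    push_neg at ha
    have hab : ¬ a ≤ b := fun h => (ha le_rfl) h
    simp [IncidenceAlgebra.apply_eq_zero_of_not_le hab]

lemma mul_iaE_apply (y : X) (f : IncidenceAlgebra R X) (a b : X) :
    (f * iaE y : IncidenceAlgebra R X) a b = if b = y then f a b else 0 := by
  rw [IncidenceAlgebra.mul_apply]
  rw [Finset.sum_eq_single b]
  · simp [iaE, iaSingle_apply]
  · intro z hz hzb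
    simp [iaE, iaSingle_apply]
    intro h1 h2; exact absurd (h1.trans h2.symm) hzb
  · intro hb
    rw [Finset.mem_Icc] at hb
    push_neg at hb
    have hab : ¬ a ≤ b := fun h => (hb h) le_rfl
    simp [IncidenceAlgebra.apply_eq_zero_of_not_le hab]

lemma iaSandwich (x y : X) (h : x ≤ y) (f : IncidenceAlgebra R X) :
    iaE x * f * iaE y = iaSingle x y h (f x y) := by
  ext a b _
  rw [mul_iaE_apply, iaSingle_apply]
  by_cases hb : b = y
  · subst hb
    rw [if_pos rfl, iaE_mul_apply]
    by_cases hax : a = x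
    · subst hax; simp
    · simp [hax]
  · simp [hb]

lemma iaDiag_mul_iaSingle (x y : X) (h : x ≤ y) (r s : R) :
    iaDiag r * iaSingle x y h s = iaSingle x y h (r * s) := by
  ext a b _
  rw [iaDiag_mul_apply, iaSingle_apply, iaSingle_apply, mul_ite, mul_zero]

lemma iaSingle_mul_iaDiag (x y : X) (h : x ≤ y) (r s : R) :
    iaSingle x y h s * iaDiag r = iaSingle x y h (s * r) := by
  ext a b _
  rw [mul_iaDiag_apply, iaSingle_apply, iaSingle_apply, ite_mul, zero_mul]

lemma iaE_diag_supported (x : X) (a b : X) (hab : a ≠ b) : (iaE x : IncidenceAlgebra R X) a b = 0 := by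
  rw [iaE, iaSingle_apply]
  split
  · next hc => exact absurd (hc.1.trans hc.2.symm) hab
  · rfl

lemma iaDiag_diag_supported (r : R) (a b : X) (hab : a ≠ b) :
    (iaDiag r : IncidenceAlgebra R X) a b = 0 := by
  rw [iaDiag_apply, if_neg hab]

/-- Key: a multiplicative automorphism scales each entry by a central element. -/
lemma isMultAut_key (φ : RingAut (IncidenceAlgebra R X)) (hφ : IsMultAut φ)
    (x y : X) (hxy : x ≤ y) :
    ∃ c : R, (∀ r : R, c * r = r * c) ∧ ∀ f : IncidenceAlgebra R X, φ f x y = f x y * c := by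
  set s : R → IncidenceAlgebra R X := iaSingle x y hxy with hs
  have hex : φ (iaE x) = iaE x := hφ.1 _ (iaE_diag_supported x)
  have hey : φ (iaE y) = iaE y := hφ.1 _ (iaE_diag_supported y)
  have hd : ∀ r : R, φ (iaDiag r) = iaDiag r := fun r => hφ.1 _ (iaDiag_diag_supported r)
  set c : R := φ (s 1) x y with hc
  -- the sandwich identity for arbitrary g, applied to φ-images
  have sand : ∀ g : IncidenceAlgebra R X, φ (iaE x * g * iaE y) = s (φ g x y) := by
    intro g
    rw [map_mul, map_mul, hex, hey, iaSandwich x y hxy]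
  have hs1 : φ (s 1) = s c := by
    have h1 : iaE x * s 1 * iaE y = s 1 := by
      rw [iaSandwich x y hxy]
      congr 1
      rw [hs, iaSingle_apply]; simp
    conv_lhs => rw [← h1]
    rw [sand]
  have hsr : ∀ r : R, φ (s r) = s (r * c) := by
    intro r
    have h1 : s r = iaDiag r * s 1 := by
      rw [hs, iaDiag_mul_iaSingle, mul_one]
    rw [h1, map_mul, hd, hs1, hs, iaDiag_mul_iaSingle]
  have hsr' : ∀ r : R, φ (s r) = s (c * r) := by
    intro r
    have h1 : s r = s 1 * iaDiag r := by
      rw [hs, iaSingle_mul_iaDiag, one_mul]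
    rw [h1, map_mul, hd, hs1, hs, iaSingle_mul_iaDiag]
  refine ⟨c, ?_, ?_⟩
  · intro r
    have := (hsr r).symm.trans (hsr' r)
    have h2 := congrArg (fun g : IncidenceAlgebra R X => g x y) this
    simpa [hs, iaSingle_apply] using h2.symm
  · intro f
    have h1 : φ (iaE x * f * iaE y) = s (φ f x y) := sand f
    have h2 : iaE x * f * iaE y = s (f x y) := iaSandwich x y hxy f
    rw [h2, hsr] at h1
    have h3 := congrArg (fun g : IncidenceAlgebra R X => g x y) h1
    simpa [hs, iaSingle_apply] using h3.symm

end Aux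

/-- Multiplicative automorphisms of the incidence algebra of a finite
poset commute with each other (the group `Mult A` is commutative). -/
theorem mult_auts_commute {X R : Type*} [PartialOrder X] [Fintype X]
    [LocallyFiniteOrder X] [DecidableEq X] [Ring R]
    (φ ψ : RingAut (IncidenceAlgebra R X)) (hφ : IsMultAut φ) (hψ : IsMultAut ψ) :
    ∀ f : IncidenceAlgebra R X, φ (ψ f) = ψ (φ f) := by
  intro f
  ext a b hab
  obtain ⟨cφ, hcφ, hφ'⟩ := isMultAut_key φ hφ a b hab
  obtain ⟨cψ, hcψ, hψ'⟩ := isMultAut_key ψ hψ a b hab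
  rw [hφ' (ψ f), hψ' f, hψ' (φ f), hφ' f, mul_assoc, mul_assoc, hcφ cψ]
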